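/- Let 0 < δ < 1 and 0 < a ≤ 1. Then as n → ∞, n ∫_{[0,1]^d \ [0,δ]^d} (1 - a x_1⋯x_d)^{n-1} dx = O((log n)^{d-2}). -/

import Mathlib

open MeasureTheory Filter Asymptotics
open Set


noncomputable def nu : Measure ℝ := volume.restrict (Icc 0 1)

instance : IsProbabilityMeasure nu := ⟨by simp [nu, Real.volume_Icc]⟩

lemma restrict_cube (m : ℕ) :
    (volume : Measure (Fin m → ℝ)).restrict (Icc 0 1) = Measure.pi (fun _ => nu) := by
  rw [← Set.pi_univ_Icc, volume_pi]
  refine Eq.symm (Measure.pi_eq fun s hs => ?_)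
  rw [Measure.restrict_apply (MeasurableSet.univ_pi hs), ← Set.pi_inter_distrib,
    Measure.pi_pi]
  simp [nu, Measure.restrict_apply (hs _), Set.inter_comm]

lemma integral_cube_succAbove {m : ℕ} (i : Fin (m+1)) (F : ℝ → (Fin m → ℝ) → ℝ)
    (hF : Continuous fun p : ℝ × (Fin m → ℝ) => F p.1 p.2)
    (hbd : ∀ t y, |F t y| ≤ 1) :
    ∫ x in Icc (0:Fin (m+1) → ℝ) 1, F (x i) (fun j => x (i.succAbove j))
      = ∫ t in Icc (0:ℝ) 1, ∫ y in Icc (0:Fin m → ℝ) 1, F t y := by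
  have mp := measurePreserving_piFinSuccAbove (fun _ : Fin (m+1) => nu) i
  have hint : Integrable (fun p : ℝ × (Fin m → ℝ) => F p.1 p.2)
      (nu.prod (Measure.pi fun _ => nu)) := by
    refine (integrable_const (1:ℝ)).mono' hF.aestronglyMeasurable ?_
    exact Filter.Eventually.of_forall fun p => by
      simpa [Real.norm_eq_abs] using hbd p.1 p.2
  calc ∫ x in Icc (0:Fin (m+1) → ℝ) 1, F (x i) (fun j => x (i.succAbove j))
      = ∫ x, (fun p : ℝ × (Fin m → ℝ) => F p.1 p.2)
          ((MeasurableEquiv.piFinSuccAbove (fun _ => ℝ) i) x)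
          ∂ Measure.pi (fun _ : Fin (m+1) => nu) := by
        rw [restrict_cube]; rfl
    _ = ∫ p : ℝ × (Fin m → ℝ), F p.1 p.2 ∂ (nu.prod (Measure.pi fun _ => nu)) :=
        mp.integral_comp (MeasurableEquiv.measurableEmbedding _) (fun p => F p.1 p.2)
    _ = ∫ t, ∫ y, F t y ∂ (Measure.pi fun _ : Fin m => nu) ∂ nu := integral_prod _ hint
    _ = ∫ t in Icc (0:ℝ) 1, ∫ y in Icc (0:Fin m → ℝ) 1, F t y := by
        rw [restrict_cube]; rfl

noncomputable def Kf : ℕ → ℕ → ℝ → ℝ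
  | 0, k, b => (1-b)^k
  | (m+1), k, b => ∫ t in Icc (0:ℝ) 1, Kf m k (b*t)

lemma bt_mem {b t : ℝ} (hb0 : 0 ≤ b) (hb1 : b ≤ 1) (ht : t ∈ Icc (0:ℝ) 1) :
    b * t ∈ Icc (0:ℝ) 1 :=
  ⟨mul_nonneg hb0 ht.1, mul_le_one₀ hb1 ht.1 ht.2⟩

lemma K_nonneg (m k : ℕ) : ∀ b ∈ Icc (0:ℝ) 1, 0 ≤ Kf m k b := by
  induction m with
  | zero => exact fun b hb => pow_nonneg (by linarith [hb.2]) k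
  | succ m ih =>
    intro b hb
    exact setIntegral_nonneg measurableSet_Icc fun t ht => ih _ (bt_mem hb.1 hb.2 ht)

lemma K_abs_le_one (m k : ℕ) : ∀ b ∈ Icc (0:ℝ) 1, |Kf m k b| ≤ 1 := by
  induction m with
  | zero =>
    intro b hb
    show |(1-b)^k| ≤ 1; rw [abs_pow]
    exact pow_le_one₀ (abs_nonneg _) (abs_le.2 ⟨by linarith [hb.2], by linarith [hb.1]⟩)
  | succ m ih =>
    intro b hb
    have : ‖∫ t in Icc (0:ℝ) 1, Kf m k (b*t)‖ ≤ 1 * (volume (Icc (0:ℝ) 1)).toReal := by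
      refine norm_setIntegral_le_of_norm_le_const_ae' (by simp [Real.volume_Icc])
        (Filter.Eventually.of_forall fun t ht => ?_)
      simpa [Real.norm_eq_abs] using ih _ (bt_mem hb.1 hb.2 ht)
    simpa [Kf, Real.volume_Icc, Real.norm_eq_abs] using this

lemma K_le_one (m k : ℕ) (b : ℝ) (hb : b ∈ Icc (0:ℝ) 1) : Kf m k b ≤ 1 :=
  (le_abs_self _).trans (K_abs_le_one m k b hb)

lemma K_anti (m k : ℕ) : AntitoneOn (Kf m k) (Icc (0:ℝ) 1) := by
  induction m with
  | zero =>
    intro b1 h1 b2 h2 h12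
    exact pow_le_pow_left₀ (by linarith [h2.2]) (by linarith) k
  | succ m ih =>
    intro b1 h1 b2 h2 h12
    have key : ∀ b ∈ Icc (0:ℝ) 1, AntitoneOn (fun t => Kf m k (b * t)) (Icc (0:ℝ) 1) := by
      intro b hb t1 ht1 t2 ht2 ht12
      exact ih (bt_mem hb.1 hb.2 ht1) (bt_mem hb.1 hb.2 ht2)
        (mul_le_mul_of_nonneg_left ht12 hb.1)
    show (∫ t in Icc (0:ℝ) 1, Kf m k (b2*t)) ≤ ∫ t in Icc (0:ℝ) 1, Kf m k (b1*t)
    refine setIntegral_mono_on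
      (AntitoneOn.integrableOn_isCompact isCompact_Icc (key b2 h2))
      (AntitoneOn.integrableOn_isCompact isCompact_Icc (key b1 h1))
      measurableSet_Icc fun t ht => ?_
    exact ih (bt_mem h1.1 h1.2 ht) (bt_mem h2.1 h2.2 ht)
      (mul_le_mul_of_nonneg_right h12 ht.1)

lemma K_integrableOn (m k : ℕ) {b : ℝ} (hb : b ∈ Icc (0:ℝ) 1) :
    IntegrableOn (fun t => Kf m k (b * t)) (Icc (0:ℝ) 1) := by
  refine AntitoneOn.integrableOn_isCompact isCompact_Icc ?_
  intro t1 ht1 t2 ht2 ht12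
  exact K_anti m k (bt_mem hb.1 hb.2 ht1) (bt_mem hb.1 hb.2 ht2)
    (mul_le_mul_of_nonneg_left ht12 hb.1)

noncomputable def cl (t : ℝ) : ℝ := max 0 (min t 1)

lemma cl_mem (t : ℝ) : cl t ∈ Icc (0:ℝ) 1 :=
  ⟨le_max_left _ _, max_le (by norm_num) (min_le_right _ _)⟩

lemma cl_eq {t : ℝ} (ht : t ∈ Icc (0:ℝ) 1) : cl t = t := by
  rw [cl, min_eq_left ht.2, max_eq_right ht.1]

lemma cl_continuous : Continuous cl :=
  continuous_const.max (continuous_id.min continuous_const)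

lemma mem_cube {m : ℕ} {x : Fin m → ℝ} (hx : x ∈ Icc (0:Fin m → ℝ) 1) (j : Fin m) :
    x j ∈ Icc (0:ℝ) 1 := ⟨hx.1 j, hx.2 j⟩

lemma prod_mem_cube {m : ℕ} {x : Fin m → ℝ} (hx : ∀ j, x j ∈ Icc (0:ℝ) 1) :
    (∏ j, x j) ∈ Icc (0:ℝ) 1 :=
  ⟨Finset.prod_nonneg fun j _ => (hx j).1,
   Finset.prod_le_one (fun j _ => (hx j).1) (fun j _ => (hx j).2)⟩

lemma Kfub (m : ℕ) : ∀ (k : ℕ) (b : ℝ), b ∈ Icc (0:ℝ) 1 →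
    (∫ x in Icc (0:Fin m → ℝ) 1, (1 - b * ∏ i, x i) ^ k) = Kf m k b := by
  induction m with
  | zero =>
    intro k b hb
    have h1 : Icc (0:Fin 0 → ℝ) 1 = Set.univ := by
      ext x; simp [Set.mem_Icc, Pi.le_def, Fin.forall_fin_zero_pi]
    rw [h1, Measure.restrict_univ, integral_unique]
    simp [Kf, volume_pi, Measure.pi_univ, Measure.real]
  | succ m ih =>
    intro k b hb
    set F : ℝ → (Fin m → ℝ) → ℝ :=
      fun t y => (1 - b * cl t * ∏ j, cl (y j)) ^ k with hF
    have hbd : ∀ (t : ℝ) (y : Fin m → ℝ), |F t y| ≤ 1 := by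
      intro t y
      rw [hF, abs_pow]
      refine pow_le_one₀ (abs_nonneg _) (abs_le.2 ⟨?_, ?_⟩)
      · have h1 : b * cl t * ∏ j, cl (y j) ≤ 1 :=
          mul_le_one₀ (mul_le_one₀ hb.2 (cl_mem t).1 (cl_mem t).2)
            (Finset.prod_nonneg fun j _ => (cl_mem (y j)).1)
            (Finset.prod_le_one (fun j _ => (cl_mem (y j)).1)
              (fun j _ => (cl_mem (y j)).2))
        linarith
      · have h2 : 0 ≤ b * cl t * ∏ j, cl (y j) :=
          mul_nonneg (mul_nonneg hb.1 (cl_mem t).1)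
            (Finset.prod_nonneg fun j _ => (cl_mem (y j)).1)
        linarith
    have hcont : Continuous fun p : ℝ × (Fin m → ℝ) => F p.1 p.2 := by
      apply Continuous.pow
      refine continuous_const.sub (Continuous.mul (continuous_const.mul
        (cl_continuous.comp continuous_fst)) ?_)
      exact continuous_finset_prod _ fun j _ =>
        cl_continuous.comp ((continuous_apply j).comp continuous_snd)
    have step1 : (∫ x in Icc (0:Fin (m+1) → ℝ) 1, (1 - b * ∏ i, x i) ^ k)
        = ∫ x in Icc (0:Fin (m+1) → ℝ) 1,
            F (x 0) (fun j => x ((0:Fin (m+1)).succAbove j)) := by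
      refine setIntegral_congr_fun measurableSet_Icc fun x hx => ?_
      have hc : (∏ j : Fin m, cl (x (Fin.succAbove 0 j)))
          = ∏ j : Fin m, x (Fin.succAbove 0 j) :=
        Finset.prod_congr rfl fun j _ => cl_eq (mem_cube hx _)
      rw [hF]
      simp only
      rw [hc, cl_eq (mem_cube hx 0), mul_assoc, ← Fin.prod_univ_succAbove (fun j => x j) 0]
    rw [step1, integral_cube_succAbove 0 F hcont hbd]
    have step2 : ∀ t ∈ Icc (0:ℝ) 1,
        (∫ y in Icc (0:Fin m → ℝ) 1, F t y) = Kf m k (b * t) := by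
      intro t ht
      rw [← ih k (b*t) (bt_mem hb.1 hb.2 ht)]
      refine setIntegral_congr_fun measurableSet_Icc fun y hy => ?_
      have hc : (∏ j, cl (y j)) = ∏ j, y j :=
        Finset.prod_congr rfl fun j _ => cl_eq (mem_cube hy _)
      rw [hF]
      simp only
      rw [hc, cl_eq ht, mul_assoc]
    rw [setIntegral_congr_fun measurableSet_Icc step2]
    rfl

lemma K1_exact (k : ℕ) (b : ℝ) (hb0 : 0 < b) :
    (∫ t in Icc (0:ℝ) 1, (1 - b*t)^k) = (1 - (1-b)^(k+1))/(b*(k+1)) := by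
  rw [integral_Icc_eq_integral_Ioc, ← intervalIntegral.integral_of_le zero_le_one]
  have hd : ∀ t : ℝ, HasDerivAt (fun t => -(1-b*t)^(k+1)/(b*(k+1))) ((1-b*t)^k) t := by
    intro t
    have h1 : HasDerivAt (fun t : ℝ => 1-b*t) (-b) t := by
      simpa using ((hasDerivAt_id t).const_mul b).const_sub 1
    have h2 := (h1.pow (k+1)).mul_const (-(1/(b*(k+1))))
    convert h2 using 2 with t
    case e'_8 => simp only [Pi.pow_apply]; ring
    case e'_9 => rw [Nat.add_sub_cancel]; push_cast
                 field_simp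
    all_goals rfl
  rw [intervalIntegral.integral_eq_sub_of_hasDerivAt (fun t _ => hd t)
    (Continuous.intervalIntegrable (by continuity) _ _)]
  field_simp
  ring

lemma K0_bound (k : ℕ) (b : ℝ) (hb0 : 0 < b) (hb1 : b ≤ 1) :
    (k+1 : ℝ) * (1-b)^k ≤ 1/b := by
  rcases eq_or_lt_of_le hb1 with h1 | h1
  · subst h1
    cases k with
    | zero => norm_num
    | succ k => simp
  · have h0 : (0:ℝ) < 1 - b := by linarith
    have ha : (0:ℝ) ≤ b/(1-b) := div_nonneg hb0.le h0.le
    have key : (1-b)^k * (1 + k*(b/(1-b))) ≤ 1 := by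
      have h2 := one_add_mul_le_pow (by linarith : (-2:ℝ) ≤ b/(1-b)) k
      have h3 : (1 + b/(1-b)) = 1/(1-b) := by field_simp; ring
      have h4 : (0:ℝ) ≤ (1-b)^k := pow_nonneg h0.le k
      calc (1-b)^k * (1 + k*(b/(1-b))) ≤ (1-b)^k * (1 + b/(1-b))^k :=
            mul_le_mul_of_nonneg_left h2 h4
        _ = 1 := by
            rw [h3, div_pow, one_pow, mul_one_div, div_self (by positivity)]
    have h5 : (k+1:ℝ)*b ≤ 1 + k*(b/(1-b)) := by
      have : b ≤ b/(1-b) := by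
        rw [le_div_iff₀ h0]; nlinarith
      have : (k:ℝ)*b ≤ k*(b/(1-b)) := mul_le_mul_of_nonneg_left this (Nat.cast_nonneg k)
      nlinarith
    rw [le_div_iff₀ hb0]
    calc (k+1:ℝ) * (1-b)^k * b = (1-b)^k * ((k+1)*b) := by ring
      _ ≤ (1-b)^k * (1 + k*(b/(1-b))) :=
          mul_le_mul_of_nonneg_left h5 (pow_nonneg h0.le k)
      _ ≤ 1 := key

lemma Q_bound (m : ℕ) : ∀ (k : ℕ) (b : ℝ), 0 < b → b ≤ 1 →
    (k+1 : ℝ) * Kf (m+1) k b ≤ (1 + Real.log (k+1))^m / b := by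
  induction m with
  | zero =>
    intro k b hb0 hb1
    have h1 : Kf 1 k b = ∫ t in Icc (0:ℝ) 1, (1 - b*t)^k := rfl
    rw [h1, K1_exact k b hb0, pow_zero]
    have h2 : (0:ℝ) ≤ (1-b)^(k+1) := pow_nonneg (by linarith) _
    have h3 : (0:ℝ) < (k:ℝ)+1 := by positivity
    have heq : (k+1:ℝ) * ((1 - (1-b)^(k+1))/(b*(k+1))) = (1 - (1-b)^(k+1))/b := by
      field_simp
    rw [heq]
    gcongr
    linarith
  | succ m ih =>
    intro k b hb0 hb1
    set L : ℝ := 1 + Real.log (k+1) with hL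
    have hk1 : (1:ℝ) ≤ (k:ℝ)+1 := by
      have := Nat.cast_nonneg (α := ℝ) k; linarith
    have hL1 : 1 ≤ L := by
      have := Real.log_nonneg hk1
      simp [hL]; linarith
    have hL0 : (0:ℝ) < L := by linarith
    have hLm : (1:ℝ) ≤ L^m := one_le_pow₀ hL1
    have hdef : Kf (m+2) k b = ∫ t in Icc (0:ℝ) 1, Kf (m+1) k (b*t) := rfl
    by_cases hcase : (k+1:ℝ)*b ≤ L^m
    · have h1 : Kf (m+2) k b ≤ 1 := K_le_one _ _ _ ⟨hb0.le, hb1⟩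
      have h2 : (k+1:ℝ) * Kf (m+2) k b ≤ (k+1:ℝ) := by
        nlinarith [K_nonneg (m+2) k b ⟨hb0.le, hb1⟩]
      refine h2.trans ?_
      rw [le_div_iff₀ hb0]
      calc (k+1:ℝ)*b ≤ L^m := hcase
        _ ≤ L^(m+1) := pow_le_pow_right₀ hL1 (by omega)
    · push_neg at hcase
      set t0 : ℝ := L^m/((k+1)*b) with ht0
      have ht00 : 0 < t0 := by
        rw [ht0]; exact div_pos (pow_pos hL0 m) (by positivity)
      have ht01 : t0 < 1 := by
        rw [ht0]; exact (div_lt_one (mul_pos (by positivity) hb0)).2 hcase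
      set ψ : ℝ → ℝ := fun t => (k+1:ℝ) * Kf (m+1) k (b*t) with hψ
      have hψint : IntegrableOn ψ (Icc (0:ℝ) 1) :=
        (K_integrableOn (m+1) k ⟨hb0.le, hb1⟩).const_mul _
      have hsplit : (k+1:ℝ) * Kf (m+2) k b
          = (∫ t in Icc (0:ℝ) t0, ψ t) + ∫ t in Ioc t0 1, ψ t := by
        rw [hdef, ← integral_const_mul, ← Set.Icc_union_Ioc_eq_Icc ht00.le ht01.le,
          setIntegral_union ((Set.Iic_disjoint_Ioc le_rfl).mono_left Set.Icc_subset_Iic_self) measurableSet_Ioc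
          (hψint.mono_set ((Set.Icc_subset_Icc le_rfl ht01.le).trans
            (subset_refl _)))
          (hψint.mono_set (Set.Ioc_subset_Icc_self.trans
            (Set.Icc_subset_Icc ht00.le le_rfl)))]
      have hbnd1 : (∫ t in Icc (0:ℝ) t0, ψ t) ≤ L^m / b := by
        have : (∫ t in Icc (0:ℝ) t0, ψ t) ≤ ∫ _ in Icc (0:ℝ) t0, (k+1:ℝ) := by
          refine setIntegral_mono_on
            (hψint.mono_set (Icc_subset_Icc le_rfl ht01.le))
            (integrableOn_const (by simp [Real.volume_Icc]))
            measurableSet_Icc fun t ht => ?_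
          have hmem : t ∈ Icc (0:ℝ) 1 := ⟨ht.1, ht.2.trans ht01.le⟩
          have := K_le_one (m+1) k (b*t) (bt_mem hb0.le hb1 hmem)
          show (k+1:ℝ) * Kf (m+1) k (b*t) ≤ (k:ℝ)+1
          nlinarith
        refine this.trans ?_
        rw [setIntegral_const, Real.volume_real_Icc_of_le ht00.le, smul_eq_mul, sub_zero,
          ht0]
        rw [div_mul_eq_mul_div, div_le_div_iff₀ (by positivity) hb0]
        ring_nf
        nlinarith [pow_nonneg (le_trans zero_le_one hL1) m]
      have hbnd2 : (∫ t in Ioc t0 1, ψ t) ≤ (L^m/b) * Real.log (k+1) := by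
        have hgint : IntegrableOn (fun t : ℝ => L^m/(b*t)) (Ioc t0 1) := by
          refine IntegrableOn.mono_set ?_ Ioc_subset_Icc_self
          refine ContinuousOn.integrableOn_compact isCompact_Icc ?_
          refine ContinuousOn.div continuousOn_const
            (continuousOn_const.mul continuousOn_id) fun t ht => ?_
          have : 0 < t := lt_of_lt_of_le ht00 ht.1
          positivity
        have hmono : (∫ t in Ioc t0 1, ψ t) ≤ ∫ t in Ioc t0 1, L^m/(b*t) := by
          refine setIntegral_mono_on
            (hψint.mono_set (Ioc_subset_Icc_self.trans (Icc_subset_Icc ht00.le le_rfl)))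
            hgint measurableSet_Ioc fun t ht => ?_
          have ht0t : 0 < t := lt_of_lt_of_le ht00 ht.1.le
          have hbt : b*t ≤ 1 := mul_le_one₀ hb1 ht0t.le ht.2
          have := ih k (b*t) (by positivity) hbt
          show (k+1:ℝ) * Kf (m+1) k (b*t) ≤ L^m/(b*t)
          exact this
        refine hmono.trans ?_
        have heq : (∫ t in Ioc t0 1, L^m/(b*t)) = (L^m/b) * ∫ t in Ioc t0 1, 1/t := by
          rw [← integral_const_mul]
          refine setIntegral_congr_fun measurableSet_Ioc fun t ht => ?_
          field_simp
        rw [heq]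
        have hmem : (0:ℝ) ∉ Set.uIcc t0 1 := by
          intro h
          rw [Set.uIcc_of_le ht01.le] at h
          exact absurd h.1 (not_le.2 ht00)
        have hlog : (∫ t in Ioc t0 1, (1:ℝ)/t) = Real.log (1/t0) := by
          rw [← intervalIntegral.integral_of_le ht01.le, integral_one_div hmem]
        rw [hlog]
        have harg : 1/t0 ≤ (k:ℝ)+1 := by
          rw [ht0, one_div, inv_div, div_le_iff₀ (pow_pos hL0 m)]
          nlinarith
        have hlog2 : Real.log (1/t0) ≤ Real.log (k+1) :=
          Real.log_le_log (by positivity) harg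
        exact mul_le_mul_of_nonneg_left hlog2
          (div_nonneg (pow_nonneg hL0.le m) hb0.le)
      calc (k+1:ℝ) * Kf (m+1+1) k b
          = (∫ t in Icc (0:ℝ) t0, ψ t) + ∫ t in Ioc t0 1, ψ t := hsplit
        _ ≤ L^m/b + (L^m/b) * Real.log (k+1) := add_le_add hbnd1 hbnd2
        _ = L^(m+1)/b := by rw [pow_succ]; field_simp [hL]; ring

lemma Kbound (m k : ℕ) (b : ℝ) (hb0 : 0 < b) (hb1 : b ≤ 1) :
    (k+1:ℝ) * Kf m k b ≤ (1 + Real.log (k+1))^(m-1)/b := by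
  cases m with
  | zero =>
    have h0 : Kf 0 k b = (1-b)^k := rfl
    rw [h0]
    simpa using K0_bound k b hb0 hb1
  | succ m => simpa using Q_bound m k b hb0 hb1

lemma cube_diff_bound (d : ℕ) (hd : 1 ≤ d) (δ a : ℝ) (hδ0 : 0 < δ) (hδ1 : δ < 1)
    (ha0 : 0 < a) (ha : a ≤ 1) (k : ℕ) :
    (k+1:ℝ) * ∫ x in Icc (0:Fin d → ℝ) 1 \ Icc 0 (fun _ => δ), (1 - a * ∏ i, x i)^k
      ≤ d * ((1 + Real.log (k+1))^(d-1-1) / (a*δ)) := by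
  obtain ⟨m, rfl⟩ : ∃ m, d = m+1 := ⟨d-1, (Nat.succ_pred_eq_of_pos hd).symm⟩
  set h : (Fin (m+1) → ℝ) → ℝ := fun x => (1 - a * ∏ i, x i)^k with hh
  set S : Set (Fin (m+1) → ℝ) := Icc 0 1 \ Icc 0 (fun _ => δ) with hS
  set T : Fin (m+1) → Set (Fin (m+1) → ℝ) :=
    fun i => Icc 0 1 ∩ {x | δ ≤ x i} with hT
  have hc0 : 0 < a*δ := mul_pos ha0 hδ0
  have hc1 : a*δ ≤ 1 := by nlinarith
  have hSm : MeasurableSet S := measurableSet_Icc.diff measurableSet_Icc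
  have hTm : ∀ i, MeasurableSet (T i) := fun i =>
    measurableSet_Icc.inter (measurableSet_le measurable_const (measurable_pi_apply i))
  have hTsub : ∀ i, T i ⊆ Icc 0 1 := fun i => Set.inter_subset_left
  have hpos : ∀ y ∈ Icc (0:Fin (m+1) → ℝ) 1, 0 ≤ h y := by
    intro y hy
    have hp := prod_mem_cube (mem_cube hy)
    have : a * ∏ i, y i ≤ 1 := mul_le_one₀ ha hp.1 hp.2
    exact pow_nonneg (by linarith) k
  have hcont : Continuous h := by
    apply Continuous.pow
    exact continuous_const.sub (continuous_const.mul
      (continuous_finset_prod _ fun i _ => continuous_apply i))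
  have hint : IntegrableOn h (Icc 0 1) :=
    hcont.continuousOn.integrableOn_compact isCompact_Icc
  -- Step A
  have hstepA : (∫ x in S, h x) ≤ ∑ i : Fin (m+1), ∫ x in T i, h x := by
    have hint1 : Integrable (S.indicator h) :=
      (hint.mono_set Set.diff_subset).integrable_indicator hSm
    have hinti : ∀ i, Integrable ((T i).indicator h) := fun i =>
      (hint.mono_set (hTsub i)).integrable_indicator (hTm i)
    have hpt : ∀ x, S.indicator h x ≤ ∑ i, (T i).indicator h x := by
      intro x
      have hterm : ∀ i, 0 ≤ (T i).indicator h x := fun i =>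
        Set.indicator_nonneg (fun y hy => hpos y (hTsub i hy)) x
      by_cases hx : x ∈ S
      · obtain ⟨i, hi⟩ : ∃ i, δ ≤ x i := by
          rcases hx with ⟨hx1, hx2⟩
          by_contra hcon
          push_neg at hcon
          exact hx2 ⟨hx1.1, fun i => (hcon i).le⟩
        have hxT : x ∈ T i := ⟨hx.1, hi⟩
        rw [Set.indicator_of_mem hx]
        calc h x = (T i).indicator h x := (Set.indicator_of_mem hxT h).symm
          _ ≤ ∑ j, (T j).indicator h x :=
            Finset.single_le_sum (fun j _ => hterm j) (Finset.mem_univ i)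
      · rw [Set.indicator_of_notMem hx]
        exact Finset.sum_nonneg fun j _ => hterm j
    calc (∫ x in S, h x) = ∫ x, S.indicator h x := (integral_indicator hSm).symm
      _ ≤ ∫ x, ∑ i, (T i).indicator h x := integral_mono hint1
          (integrable_finset_sum _ fun i _ => hinti i) hpt
      _ = ∑ i, ∫ x, (T i).indicator h x := integral_finset_sum _ fun i _ => hinti i
      _ = ∑ i, ∫ x in T i, h x := by
          exact Finset.sum_congr rfl fun i _ => integral_indicator (hTm i)
  -- Step B/C : each piece bounded by Kf m k (a*δ)
  have hstepB : ∀ i, (∫ x in T i, h x) ≤ Kf m k (a*δ) := by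
    intro i
    set F : ℝ → (Fin m → ℝ) → ℝ :=
      fun t y => (1 - a * δ * ∏ j, cl (y j))^k with hF
    have hFprod : ∀ y : Fin m → ℝ, (∏ j, cl (y j)) ∈ Icc (0:ℝ) 1 :=
      fun y => prod_mem_cube (fun j => cl_mem (y j))
    have hFbase : ∀ (t : ℝ) (y : Fin m → ℝ), a * δ * ∏ j, cl (y j) ∈ Icc (0:ℝ) 1 := by
      intro t y
      exact ⟨mul_nonneg hc0.le (hFprod y).1, mul_le_one₀ hc1 (hFprod y).1 (hFprod y).2⟩
    have hbd : ∀ (t : ℝ) (y : Fin m → ℝ), |F t y| ≤ 1 := by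
      intro t y
      rw [hF, abs_pow]
      refine pow_le_one₀ (abs_nonneg _) (abs_le.2 ⟨?_, ?_⟩)
      · linarith [(hFbase t y).2]
      · linarith [(hFbase t y).1]
    have hFcont : Continuous fun p : ℝ × (Fin m → ℝ) => F p.1 p.2 := by
      apply Continuous.pow
      refine continuous_const.sub (continuous_const.mul ?_)
      exact continuous_finset_prod _ fun j _ =>
        cl_continuous.comp ((continuous_apply j).comp continuous_snd)
    have hgnn : ∀ x : Fin (m+1) → ℝ,
        0 ≤ F (x i) (fun j => x (i.succAbove j)) := by
      intro x
      rw [hF]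
      refine pow_nonneg ?_ k
      have := (hFbase (x i) (fun j => x (i.succAbove j))).2
      linarith
    have hgcont : Continuous (fun x : Fin (m+1) → ℝ =>
        F (x i) (fun j => x (i.succAbove j))) := by
      have c1 : Continuous (fun x : Fin (m+1) → ℝ =>
          ((x i, fun j => x (i.succAbove j)) : ℝ × (Fin m → ℝ))) :=
        (continuous_apply i).prodMk
          (continuous_pi fun j => continuous_apply (i.succAbove j))
      exact hFcont.comp c1
    have hgint : IntegrableOn (fun x : Fin (m+1) → ℝ =>
        F (x i) (fun j => x (i.succAbove j))) (Icc 0 1) :=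
      hgcont.continuousOn.integrableOn_compact isCompact_Icc
    calc (∫ x in T i, h x)
        ≤ ∫ x in T i, F (x i) (fun j => x (i.succAbove j)) := by
          refine setIntegral_mono_on (hint.mono_set (hTsub i))
            (hgint.mono_set (hTsub i)) (hTm i) fun x hx => ?_
          have hxc : x ∈ Icc (0:Fin (m+1) → ℝ) 1 := hTsub i hx
          have hcl : (∏ j, cl (x (i.succAbove j))) = ∏ j, x (i.succAbove j) :=
            Finset.prod_congr rfl fun j _ => cl_eq (mem_cube hxc _)
          rw [hh, hF]
          simp only
          rw [hcl]
          have hprodsplit : (∏ j, x j) = x i * ∏ j, x (i.succAbove j) :=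
            Fin.prod_univ_succAbove (fun j => x j) i
          have hpnn : (0:ℝ) ≤ ∏ j, x (i.succAbove j) :=
            Finset.prod_nonneg fun j _ => (mem_cube hxc _).1
          have hple : a * ∏ j, x j ≤ 1 := by
            have hp := prod_mem_cube (mem_cube hxc)
            exact mul_le_one₀ ha hp.1 hp.2
          refine pow_le_pow_left₀ (by linarith) ?_ k
          have : a * δ * ∏ j, x (i.succAbove j) ≤ a * ∏ j, x j := by
            rw [hprodsplit]
            have hxi : δ ≤ x i := hx.2
            nlinarith [mul_nonneg (mul_nonneg ha0.le hpnn) (sub_nonneg.2 hxi)]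
          linarith
      _ ≤ ∫ x in Icc (0:Fin (m+1) → ℝ) 1, F (x i) (fun j => x (i.succAbove j)) := by
          refine setIntegral_mono_set hgint
            (Filter.Eventually.of_forall fun x => hgnn x)
            ((hTsub i).eventuallyLE)
      _ = ∫ t in Icc (0:ℝ) 1, ∫ y in Icc (0:Fin m → ℝ) 1, F t y :=
          integral_cube_succAbove i F hFcont hbd
      _ = ∫ t in Icc (0:ℝ) 1, Kf m k (a*δ) := by
          have hinner : ∀ t : ℝ, (∫ y in Icc (0:Fin m → ℝ) 1, F t y) = Kf m k (a*δ) := by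
            intro t
            have he : (∫ y in Icc (0:Fin m → ℝ) 1, F t y)
                = ∫ y in Icc (0:Fin m → ℝ) 1, (1 - a * δ * ∏ j, y j)^k := by
              refine setIntegral_congr_fun measurableSet_Icc fun y hy => ?_
              rw [hF]
              simp only
              rw [Finset.prod_congr rfl fun j _ => cl_eq (mem_cube hy j)]
            rw [he, Kfub m k (a*δ) ⟨hc0.le, hc1⟩]
          exact setIntegral_congr_fun measurableSet_Icc fun t _ => hinner t
      _ = Kf m k (a*δ) := by
          rw [setIntegral_const, Real.volume_real_Icc_of_le zero_le_one, smul_eq_mul]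
          norm_num
  have hsum : (∫ x in S, h x) ≤ (m+1 : ℝ) * Kf m k (a*δ) := by
    refine hstepA.trans ?_
    calc (∑ i : Fin (m+1), ∫ x in T i, h x) ≤ ∑ _i : Fin (m+1), Kf m k (a*δ) :=
          Finset.sum_le_sum fun i _ => hstepB i
      _ = (m+1:ℝ) * Kf m k (a*δ) := by
          rw [Finset.sum_const, Finset.card_univ, Fintype.card_fin]
          push_cast
          ring
  have hk1 : (0:ℝ) < (k:ℝ)+1 := by positivity
  calc (k+1:ℝ) * ∫ x in S, h x ≤ (k+1:ℝ) * ((m+1:ℝ) * Kf m k (a*δ)) :=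
        mul_le_mul_of_nonneg_left hsum hk1.le
    _ = (m+1:ℝ) * ((k+1:ℝ) * Kf m k (a*δ)) := by ring
    _ ≤ (m+1:ℝ) * ((1 + Real.log (k+1))^(m-1) / (a*δ)) := by
        refine mul_le_mul_of_nonneg_left (Kbound m k (a*δ) hc0 hc1) ?_
        positivity
    _ = ((m+1:ℕ):ℝ) * ((1 + Real.log (k+1))^(m+1-1-1) / (a*δ)) := by push_cast; ring


/-- For `0 < δ < 1` and `0 < a ≤ 1`,
`n ∫_{[0,1]^d \ [0,δ]^d} (1 - a x₁⋯x_d)^{n-1} dx = O((log n)^{d-2})`. -/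
theorem stmt4 (d : ℕ) (hd : 1 ≤ d) (δ a : ℝ) (hδ0 : 0 < δ) (hδ1 : δ < 1)
    (ha0 : 0 < a) (ha : a ≤ 1) :
    (fun n : ℕ =>
        (n : ℝ) * ∫ x in Set.Icc (0 : Fin d → ℝ) 1 \ Set.Icc 0 (fun _ => δ),
          (1 - a * ∏ i, x i) ^ (n - 1))
      =O[atTop] (fun n : ℕ => (Real.log n) ^ (d - 2)) := by
  rw [isBigO_iff]
  refine ⟨(d:ℝ) * 2^(d-2) / (a*δ), ?_⟩
  filter_upwards [eventually_ge_atTop 3] with n hn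
  have hn1 : 1 ≤ n := by omega
  have hnR : (3:ℝ) ≤ (n:ℝ) := by exact_mod_cast hn
  have hn0 : (0:ℝ) < (n:ℝ) := by linarith
  set k := n - 1 with hk
  have hkn : ((k:ℝ)+1) = (n:ℝ) := by
    rw [hk, Nat.cast_sub hn1]; ring
  clear_value k
  have key := cube_diff_bound d hd δ a hδ0 hδ1 ha0 ha k
  rw [hkn] at key
  have hdd : d-1-1 = d-2 := by omega
  rw [hdd] at key
  have hI0 : 0 ≤ ∫ x in Icc (0:Fin d → ℝ) 1 \ Icc 0 (fun _ => δ),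
      (1 - a * ∏ i, x i)^k := by
    refine setIntegral_nonneg (measurableSet_Icc.diff measurableSet_Icc) fun x hx => ?_
    have hxc : x ∈ Icc (0:Fin d → ℝ) 1 := hx.1
    have hp := prod_mem_cube (mem_cube hxc)
    have : a * ∏ i, x i ≤ 1 := mul_le_one₀ ha hp.1 hp.2
    exact pow_nonneg (by linarith) k
  have hlog1 : 1 ≤ Real.log n := by
    rw [Real.le_log_iff_exp_le hn0]
    calc Real.exp 1 ≤ 2.7182818286 := Real.exp_one_lt_d9.le
      _ ≤ 3 := by norm_num
      _ ≤ (n:ℝ) := hnR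
  have hRHS : |(Real.log n)^(d-2)| = (Real.log n)^(d-2) :=
    abs_of_nonneg (pow_nonneg (by linarith) _)
  have hLHS : |(n:ℝ) * ∫ x in Icc (0:Fin d → ℝ) 1 \ Icc 0 (fun _ => δ),
      (1 - a * ∏ i, x i)^k|
      = (n:ℝ) * ∫ x in Icc (0:Fin d → ℝ) 1 \ Icc 0 (fun _ => δ),
        (1 - a * ∏ i, x i)^k :=
    abs_of_nonneg (mul_nonneg hn0.le hI0)
  rw [Real.norm_eq_abs, Real.norm_eq_abs, hRHS, hLHS]
  refine key.trans ?_
  have hpow : (1 + Real.log n)^(d-2) ≤ 2^(d-2) * (Real.log n)^(d-2) := by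
    rw [← mul_pow]
    exact pow_le_pow_left₀ (by linarith) (by linarith) _
  calc (d:ℝ) * ((1 + Real.log n)^(d-2) / (a*δ))
      ≤ (d:ℝ) * ((2^(d-2) * (Real.log n)^(d-2)) / (a*δ)) := by
        refine mul_le_mul_of_nonneg_left ?_ (Nat.cast_nonneg d)
        gcongr
    _ = (d:ℝ) * 2^(d-2) / (a*δ) * (Real.log n)^(d-2) := by ring
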